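/- In Max M₂(ℂ) (where M₂(ℂ) is the C*-algebra of 2×2 complex matrices), let P be the subspace of symmetric matrices {(a b; b c) : a, b, c ∈ ℂ}, R the subspace {(a b; 0 0) : a, b ∈ ℂ}, and L the subspace {(a 0; b 0) : a, b ∈ ℂ}. Then R∘⊤∘L = {(a 0; 0 0) : a ∈ ℂ} ≤ P while R ≰ P and L ≰ P, so P is not prime, although P is a maximal proper linear subspace of M₂(ℂ). Consequently P is not a meet of prime elements, and hence Max M₂(ℂ) is not spatial with respect to irreducible representations. -/
import Mathlib


abbrev M2C := Matrix (Fin 2) (Fin 2) ℂ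

/-- The quantale multiplication of `Max M₂(ℂ)`: `M∘N` is the closure of the linear span of
the products (all subspaces of `M₂(ℂ)` are closed). -/
noncomputable def qmul (M N : Submodule ℂ M2C) : Submodule ℂ M2C :=
  (M * N).topologicalClosure

/-- A prime element of the quantale `Max M₂(ℂ)`: `M∘⊤∘N ≤ P` implies `M ≤ P` or `N ≤ P`. -/
def IsPrimeEl (P : Submodule ℂ M2C) : Prop :=
  ∀ M N : Submodule ℂ M2C, IsClosed (M : Set M2C) → IsClosed (N : Set M2C) →
    qmul (qmul M ⊤) N ≤ P → M ≤ P ∨ N ≤ P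

/-- The subspace of symmetric matrices `(a b; b c)`. -/
noncomputable def symmSub : Submodule ℂ M2C where
  carrier := {m | m 0 1 = m 1 0}
  add_mem' := by
    intro a b ha hb
    simp only [Set.mem_setOf_eq, Matrix.add_apply] at *
    rw [ha, hb]
  zero_mem' := rfl
  smul_mem' := by
    intro c m hm
    simp only [Set.mem_setOf_eq, Matrix.smul_apply] at *
    rw [hm]

/-- The subspace `{(a b; 0 0)}` of matrices with zero second row. -/
noncomputable def rowSub : Submodule ℂ M2C where
  carrier := {m | m 1 0 = 0 ∧ m 1 1 = 0}
  add_mem' := by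
    intro a b ha hb
    simp only [Set.mem_setOf_eq, Matrix.add_apply] at *
    rw [ha.1, ha.2, hb.1, hb.2]
    simp
  zero_mem' := ⟨rfl, rfl⟩
  smul_mem' := by
    intro c m hm
    simp only [Set.mem_setOf_eq, Matrix.smul_apply] at *
    rw [hm.1, hm.2]
    simp
  
/-- The subspace `{(a 0; b 0)}` of matrices with zero second column. -/
noncomputable def colSub : Submodule ℂ M2C where
  carrier := {m | m 0 1 = 0 ∧ m 1 1 = 0}
  add_mem' := by
    intro a b ha hb
    simp only [Set.mem_setOf_eq, Matrix.add_apply] at *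
    rw [ha.1, ha.2, hb.1, hb.2]
    simp
  zero_mem' := ⟨rfl, rfl⟩
  smul_mem' := by
    intro c m hm
    simp only [Set.mem_setOf_eq, Matrix.smul_apply] at *
    rw [hm.1, hm.2]
    simp


lemma qclosed (s : Submodule ℂ M2C) : IsClosed (s : Set M2C) :=
  s.closed_of_finiteDimensional

lemma qmul_eq (M N : Submodule ℂ M2C) : qmul M N = M * N :=
  (qclosed (M * N)).submodule_topologicalClosure_eq

lemma mem_symmSub {m : M2C} : m ∈ symmSub ↔ m 0 1 = m 1 0 := Iff.rfl
lemma mem_rowSub {m : M2C} : m ∈ rowSub ↔ m 1 0 = 0 ∧ m 1 1 = 0 := Iff.rfl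
lemma mem_colSub {m : M2C} : m ∈ colSub ↔ m 0 1 = 0 ∧ m 1 1 = 0 := Iff.rfl

lemma RTL_eq : qmul (qmul rowSub ⊤) colSub
    = Submodule.span ℂ {(!![1, 0; 0, 0] : M2C)} := by
  rw [qmul_eq, qmul_eq]
  apply le_antisymm
  · apply Submodule.mul_le.2
    intro x hx y hy
    have hx' : x ∈ rowSub := by
      refine Submodule.mul_le.2 ?_ hx
      intro a ha b _
      rw [mem_rowSub] at ha ⊢
      constructor <;>
        simp [Matrix.mul_apply, Fin.sum_univ_two, ha.1, ha.2]
    rw [mem_rowSub] at hx'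
    rw [mem_colSub] at hy
    rw [Submodule.mem_span_singleton]
    refine ⟨x 0 0 * y 0 0 + x 0 1 * y 1 0, ?_⟩
    ext i j
    fin_cases i <;> fin_cases j <;>
      simp [Matrix.mul_apply, Fin.sum_univ_two, hx'.1, hx'.2, hy.1, hy.2]
  · rw [Submodule.span_le, Set.singleton_subset_iff]
    have h1 : (!![1, 0; 0, 0] : M2C) ∈ rowSub := by
      rw [mem_rowSub]; constructor <;> simp
    have h2 : (!![1, 0; 0, 0] : M2C) ∈ colSub := by
      rw [mem_colSub]; constructor <;> simp
    have := Submodule.mul_mem_mul (Submodule.mul_mem_mul h1 (Submodule.mem_top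
        (x := (1 : M2C)))) h2
    have heq : (!![1, 0; 0, 0] : M2C) * 1 * !![1, 0; 0, 0] = !![1, 0; 0, 0] := by
      ext i j
      fin_cases i <;> fin_cases j <;> simp [Matrix.mul_apply, Fin.sum_univ_two]
    exact heq ▸ this

lemma RTL_le : qmul (qmul rowSub ⊤) colSub ≤ symmSub := by
  rw [RTL_eq, Submodule.span_le, Set.singleton_subset_iff]
  rw [SetLike.mem_coe, mem_symmSub]
  simp

lemma R_not_le : ¬ rowSub ≤ symmSub := by
  intro h
  have hm : (!![0, 1; 0, 0] : M2C) ∈ rowSub := by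
    rw [mem_rowSub]; constructor <;> simp
  have := h hm
  rw [mem_symmSub] at this
  simp at this

lemma L_not_le : ¬ colSub ≤ symmSub := by
  intro h
  have hm : (!![0, 0; 1, 0] : M2C) ∈ colSub := by
    rw [mem_colSub]; constructor <;> simp
  have := h hm
  rw [mem_symmSub] at this
  simp at this

lemma symm_not_prime : ¬ IsPrimeEl symmSub := by
  intro h
  rcases h rowSub colSub (qclosed _) (qclosed _) RTL_le with h' | h'
  · exact R_not_le h'
  · exact L_not_le h'

lemma symm_ne_top : symmSub ≠ ⊤ := by
  intro h
  exact R_not_le (le_top.trans_eq h.symm)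

lemma symm_maximal : ∀ M : Submodule ℂ M2C, symmSub < M → M = ⊤ := by
  intro M hM
  rcases SetLike.exists_of_lt hM with ⟨x, hxM, hxP⟩
  rw [mem_symmSub] at hxP
  have hx : x 0 1 - x 1 0 ≠ 0 := sub_ne_zero.2 hxP
  rw [eq_top_iff]
  intro y _
  set c : ℂ := (y 0 1 - y 1 0) / (x 0 1 - x 1 0) with hc
  have hyP : y - c • x ∈ symmSub := by
    rw [mem_symmSub]
    simp only [Matrix.sub_apply, Matrix.smul_apply, smul_eq_mul, hc]
    field_simp
    ring
  have : y - c • x ∈ M := hM.le hyP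
  have := M.add_mem this (M.smul_mem c hxM)
  simpa using this

lemma sInf_primes_eq_top :
    sInf {p : Submodule ℂ M2C |
        IsClosed (p : Set M2C) ∧ IsPrimeEl p ∧ symmSub ≤ p} = ⊤ := by
  rw [eq_top_iff, le_sInf_iff]
  rintro p ⟨-, hprime, hle⟩
  rcases eq_or_lt_of_le hle with h | h
  · exact absurd (h ▸ hprime) symm_not_prime
  · exact (symm_maximal p h).ge

/-- In `Max M₂(ℂ)`, the subspace `P` of symmetric matrices is a maximal proper
linear subspace but not a prime element: `R∘⊤∘L = ℂ·(1 0; 0 0) ≤ P` while `R ≰ P`, `L ≰ P`.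
Consequently `P` is not a meet of prime elements and `Max M₂(ℂ)` is not spatial with respect
to irreducible representations. -/
theorem maxM2C_not_spatial :
    (qmul (qmul rowSub ⊤) colSub = Submodule.span ℂ {(!![1, 0; 0, 0] : M2C)} ∧
      qmul (qmul rowSub ⊤) colSub ≤ symmSub ∧
      ¬ rowSub ≤ symmSub ∧ ¬ colSub ≤ symmSub) ∧
    ¬ IsPrimeEl symmSub ∧
    (symmSub ≠ ⊤ ∧ ∀ M : Submodule ℂ M2C, symmSub < M → M = ⊤) ∧
    symmSub ≠ sInf {p : Submodule ℂ M2C |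
        IsClosed (p : Set M2C) ∧ IsPrimeEl p ∧ symmSub ≤ p} ∧
    ¬ (∀ m : Submodule ℂ M2C, IsClosed (m : Set M2C) →
        m = sInf {p : Submodule ℂ M2C |
          IsClosed (p : Set M2C) ∧ IsPrimeEl p ∧ m ≤ p}) := by
  have h1 := RTL_eq
  have h2 := RTL_le
  have h3 := R_not_le
  have h4 := L_not_le
  have h5 := symm_not_prime
  have h6 := symm_ne_top
  have h7 := symm_maximal
  have h8 : symmSub ≠ sInf {p : Submodule ℂ M2C |
      IsClosed (p : Set M2C) ∧ IsPrimeEl p ∧ symmSub ≤ p} := by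
    rw [sInf_primes_eq_top]; exact h6
  refine ⟨⟨h1, h2, h3, h4⟩, h5, ⟨h6, h7⟩, h8, ?_⟩
  intro hall
  exact h8 (hall symmSub (qclosed _))
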